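/- arXiv:2511.05217 — 2 statements merged into one kernel-verified Lean document; each statement's English description precedes it below -/
import Mathlib

section
/- Let E be a real separable Banach space, p ≥ 1 and γ ∈ (0,1]. Let ν₁, ν₂ be Borel probability measures on E with ∫ ‖u‖^p dν₁(u) < ∞ and ∫ ‖u‖^p dν₂(u) < ∞, and let π be any coupling of ν₁ and ν₂ (a probability measure on E × E with marginals ν₁ and ν₂). Then for every f ∈ C_{p,γ}, |∫ f dν₁ − ∫ f dν₂| ≤ ‖f‖_{p,γ} · (1 + ∫‖u‖^p dν₁(u) + ∫‖u‖^p dν₂(u))^{1/2} · (∫_{E×E} (1 ∧ ‖u₁−u₂‖²) dπ(u₁,u₂))^{γ/2}. -/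
open MeasureTheory Filter Topology

noncomputable section

/-- The quasi-metric `d_{p,γ}(u₁,u₂) = (1 ∧ ‖u₁−u₂‖^γ)(1+‖u₁‖^p+‖u₂‖^p)^{1/2}`. -/
def dpg {E : Type*} [NormedAddCommGroup E] (p γ : ℝ) (u v : E) : ℝ :=
  min 1 (‖u - v‖ ^ γ) * Real.sqrt (1 + ‖u‖ ^ p + ‖v‖ ^ p)

/-- Membership in the class `C_{p,γ}`: `f` is measurable and the two suprema defining
`‖f‖_{p,γ}` are finite. -/
def MemC {E : Type*} [NormedAddCommGroup E] [MeasurableSpace E] (p γ : ℝ) (f : E → ℝ) : Prop :=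
  Measurable f ∧
  BddAbove (Set.range fun u : E => |f u| / (1 + ‖u‖ ^ (p / 2))) ∧
  BddAbove {a : ℝ | ∃ u v : E, u ≠ v ∧ a = |f u - f v| / dpg p γ u v}

/-- The norm `‖f‖_{p,γ}` of the class `C_{p,γ}`. -/
def CNorm {E : Type*} [NormedAddCommGroup E] (p γ : ℝ) (f : E → ℝ) : ℝ :=
  sSup (Set.range fun u : E => |f u| / (1 + ‖u‖ ^ (p / 2))) +
  sSup {a : ℝ | ∃ u v : E, u ≠ v ∧ a = |f u - f v| / dpg p γ u v}

/-- Jensen's inequality for `x ↦ x^γ`, `γ ∈ (0,1]`, on a probability space. -/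
lemma jensen_rpow {α : Type*} [MeasurableSpace α] (μ : Measure α) [IsProbabilityMeasure μ]
    {g : α → ℝ} {γ : ℝ} (hγ0 : 0 < γ) (hγ1 : γ ≤ 1)
    (hg : Integrable g μ) (hgγ : Integrable (fun x => g x ^ γ) μ) (hg0 : ∀ x, 0 ≤ g x) :
    ∫ x, g x ^ γ ∂μ ≤ (∫ x, g x ∂μ) ^ γ := by
  set a := ∫ x, g x ∂μ with ha
  have ha0 : 0 ≤ a := integral_nonneg hg0
  rcases ha0.eq_or_lt with h0 | hpos
  · have hzero : g =ᵐ[μ] 0 := (integral_eq_zero_iff_of_nonneg hg0 hg).mp h0.symm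
    have hz2 : (fun x => g x ^ γ) =ᵐ[μ] (fun _ => (0 : ℝ)) := by
      filter_upwards [hzero] with x hx
      simp [hx, Real.zero_rpow hγ0.ne']
    rw [integral_congr_ae hz2, integral_const, ← h0, Real.zero_rpow hγ0.ne']
    simp
  · have hpt : ∀ x, g x ^ γ ≤ γ * a ^ (γ - 1) * g x + (1 - γ) * a ^ γ := by
      intro x
      have hgm := Real.geom_mean_le_arith_mean2_weighted (w₁ := γ) (w₂ := 1 - γ)
        (p₁ := g x / a) (p₂ := 1) hγ0.le (by linarith)
        (div_nonneg (hg0 x) hpos.le) zero_le_one (by ring)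
      rw [Real.one_rpow, mul_one, mul_one] at hgm
      have haγ : (0 : ℝ) < a ^ γ := Real.rpow_pos_of_pos hpos γ
      have hdiv : (g x / a) ^ γ = g x ^ γ / a ^ γ := Real.div_rpow (hg0 x) hpos.le γ
      rw [hdiv] at hgm
      have h1 : g x ^ γ ≤ (γ * (g x / a) + (1 - γ)) * a ^ γ := by
        rw [← div_le_iff₀ haγ]
        exact hgm
      have h2 : a ^ (γ - 1) = a ^ γ / a := by
        rw [Real.rpow_sub hpos, Real.rpow_one]
      calc g x ^ γ ≤ (γ * (g x / a) + (1 - γ)) * a ^ γ := h1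
        _ = γ * (a ^ γ / a) * g x + (1 - γ) * a ^ γ := by field_simp
        _ = γ * a ^ (γ - 1) * g x + (1 - γ) * a ^ γ := by rw [h2]
    have hInt : Integrable (fun x => γ * a ^ (γ - 1) * g x + (1 - γ) * a ^ γ) μ :=
      (hg.const_mul _).add (integrable_const _)
    have := integral_mono hgγ hInt hpt
    rw [integral_add (hg.const_mul _) (integrable_const _), integral_const_mul,
      integral_const, probReal_univ, one_smul, ← ha] at this
    have hmul : a ^ (γ - 1) * a = a ^ γ := by
      rw [← Real.rpow_add_one hpos.ne' (γ - 1)]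
      ring_nf
    nlinarith [this, hmul]

/-- Estimate of `|ν₁(f) − ν₂(f)|` for `f ∈ C_{p,γ}` in terms of the `p`-th
moments of `ν₁, ν₂` and an arbitrary coupling `π` of `ν₁` and `ν₂`. -/
theorem integral_difference_bound_of_coupling
    {E : Type*} [NormedAddCommGroup E] [NormedSpace ℝ E] [CompleteSpace E]
    [MeasurableSpace E] [BorelSpace E] [SecondCountableTopology E]
    (p γ : ℝ) (hp : 1 ≤ p) (hγ : γ ∈ Set.Ioc (0 : ℝ) 1)
    (ν₁ ν₂ : Measure E) [IsProbabilityMeasure ν₁] [IsProbabilityMeasure ν₂]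
    (hm₁ : Integrable (fun u : E => ‖u‖ ^ p) ν₁)
    (hm₂ : Integrable (fun u : E => ‖u‖ ^ p) ν₂)
    (π : Measure (E × E)) [IsProbabilityMeasure π]
    (hπ₁ : π.map Prod.fst = ν₁) (hπ₂ : π.map Prod.snd = ν₂)
    (f : E → ℝ) (hf : MemC p γ f) :
    |(∫ u, f u ∂ν₁) - ∫ u, f u ∂ν₂|
      ≤ CNorm p γ f * Real.sqrt (1 + (∫ u, ‖u‖ ^ p ∂ν₁) + ∫ u, ‖u‖ ^ p ∂ν₂) *
        (∫ z : E × E, min 1 (‖z.1 - z.2‖ ^ 2) ∂π) ^ (γ / 2) := by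
  obtain ⟨hγ0, hγ1⟩ := hγ
  obtain ⟨hfm, hB1, hB2⟩ := hf
  set M := sSup (Set.range fun u : E => |f u| / (1 + ‖u‖ ^ (p / 2))) with hM
  set L := sSup {a : ℝ | ∃ u v : E, u ≠ v ∧ a = |f u - f v| / dpg p γ u v} with hL
  have hrp : ∀ u : E, (0 : ℝ) ≤ ‖u‖ ^ p := fun u => Real.rpow_nonneg (norm_nonneg u) p
  have hdpg0 : ∀ u v : E, 0 ≤ dpg p γ u v := fun u v =>
    mul_nonneg (le_min zero_le_one (Real.rpow_nonneg (norm_nonneg _) γ)) (Real.sqrt_nonneg _)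
  have hM0 : 0 ≤ M := le_trans (by positivity) (le_csSup hB1 ⟨(0 : E), rfl⟩)
  have hL0 : 0 ≤ L := Real.sSup_nonneg (by
    rintro a ⟨u, v, huv, rfl⟩
    exact div_nonneg (abs_nonneg _) (hdpg0 u v))
  -- key pointwise Lipschitz-type bound
  have hkey : ∀ u v : E, |f u - f v| ≤ L * dpg p γ u v := by
    intro u v
    rcases eq_or_ne u v with rfl | huv
    · simp [dpg, sub_self, Real.zero_rpow hγ0.ne']
    · have hd : 0 < dpg p γ u v := by
        apply mul_pos (lt_min one_pos _) (Real.sqrt_pos.mpr (by positivity))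
        exact Real.rpow_pos_of_pos (norm_pos_iff.mpr (sub_ne_zero.mpr huv)) γ
      have hle : |f u - f v| / dpg p γ u v ≤ L := le_csSup hB2 ⟨u, v, huv, rfl⟩
      calc |f u - f v| = (|f u - f v| / dpg p γ u v) * dpg p γ u v := by field_simp
        _ ≤ L * dpg p γ u v := mul_le_mul_of_nonneg_right hle hd.le
  -- growth bound
  have hgrow : ∀ u : E, |f u| ≤ M * 2 + M * ‖u‖ ^ p := by
    intro u
    have h1 : |f u| / (1 + ‖u‖ ^ (p / 2)) ≤ M := le_csSup hB1 ⟨u, rfl⟩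
    have hden : (0 : ℝ) < 1 + ‖u‖ ^ (p / 2) := by positivity
    have h2 : |f u| ≤ M * (1 + ‖u‖ ^ (p / 2)) := by
      rw [div_le_iff₀ hden] at h1; linarith [h1]
    have h3 : ‖u‖ ^ (p / 2) ≤ 1 + ‖u‖ ^ p := by
      rcases le_total (‖u‖) 1 with h | h
      · have := Real.rpow_le_one (norm_nonneg u) h (by positivity : (0:ℝ) ≤ p / 2)
        linarith [hrp u]
      · have := Real.rpow_le_rpow_of_exponent_le h (by linarith : p / 2 ≤ p)
        linarith
    nlinarith [mul_le_mul_of_nonneg_left h3 hM0]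
  -- integrability of f against the marginals
  have hfi : ∀ (ν : Measure E), IsProbabilityMeasure ν →
      Integrable (fun u : E => ‖u‖ ^ p) ν → Integrable f ν := by
    intro ν _ hmom
    refine Integrable.mono' ((integrable_const (M * 2)).add (hmom.const_mul M))
      hfm.aestronglyMeasurable (ae_of_all _ fun u => ?_)
    rw [Real.norm_eq_abs]
    exact hgrow u
  have hnpm : Measurable fun u : E => ‖u‖ ^ p := measurable_norm.pow_const p
  -- transfer to π
  have hc1 : Integrable (fun z : E × E => f z.1) π := by
    have h := hfi ν₁ inferInstance hm₁
    rw [← hπ₁] at h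
    exact (integrable_map_measure hfm.aestronglyMeasurable measurable_fst.aemeasurable).mp h
  have hc2 : Integrable (fun z : E × E => f z.2) π := by
    have h := hfi ν₂ inferInstance hm₂
    rw [← hπ₂] at h
    exact (integrable_map_measure hfm.aestronglyMeasurable measurable_snd.aemeasurable).mp h
  have hmπ1 : Integrable (fun z : E × E => ‖z.1‖ ^ p) π := by
    have h := hm₁; rw [← hπ₁] at h
    exact (integrable_map_measure hnpm.aestronglyMeasurable measurable_fst.aemeasurable).mp h
  have hmπ2 : Integrable (fun z : E × E => ‖z.2‖ ^ p) π := by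
    have h := hm₂; rw [← hπ₂] at h
    exact (integrable_map_measure hnpm.aestronglyMeasurable measurable_snd.aemeasurable).mp h
  have hI1 : ∫ u, f u ∂ν₁ = ∫ z : E × E, f z.1 ∂π := by
    rw [← hπ₁, integral_map measurable_fst.aemeasurable hfm.aestronglyMeasurable]
  have hI2 : ∫ u, f u ∂ν₂ = ∫ z : E × E, f z.2 ∂π := by
    rw [← hπ₂, integral_map measurable_snd.aemeasurable hfm.aestronglyMeasurable]
  have hIm1 : ∫ u, ‖u‖ ^ p ∂ν₁ = ∫ z : E × E, ‖z.1‖ ^ p ∂π := by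
    rw [← hπ₁, integral_map measurable_fst.aemeasurable hnpm.aestronglyMeasurable]
  have hIm2 : ∫ u, ‖u‖ ^ p ∂ν₂ = ∫ z : E × E, ‖z.2‖ ^ p ∂π := by
    rw [← hπ₂, integral_map measurable_snd.aemeasurable hnpm.aestronglyMeasurable]
  -- the two factors of `dpg`
  set G : E × E → ℝ := fun z => min 1 (‖z.1 - z.2‖ ^ γ) with hGdef
  set H : E × E → ℝ := fun z => Real.sqrt (1 + ‖z.1‖ ^ p + ‖z.2‖ ^ p) with hHdef
  have hGm : Measurable G :=
    measurable_const.min ((measurable_fst.sub measurable_snd).norm.pow_const γ)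
  have hHm : Measurable H :=
    ((measurable_const.add (hnpm.comp measurable_fst)).add (hnpm.comp measurable_snd)).sqrt
  have hG0 : ∀ z, 0 ≤ G z := fun z =>
    le_min zero_le_one (Real.rpow_nonneg (norm_nonneg _) γ)
  have hG1 : ∀ z, G z ≤ 1 := fun z => min_le_left _ _
  have hHsq : ∀ z : E × E, H z ^ (2 : ℝ) = 1 + ‖z.1‖ ^ p + ‖z.2‖ ^ p := by
    intro z
    rw [show (2 : ℝ) = ((2 : ℕ) : ℝ) by norm_num, Real.rpow_natCast]
    exact Real.sq_sqrt (by positivity)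
  have hHsqInt : Integrable (fun z : E × E => 1 + ‖z.1‖ ^ p + ‖z.2‖ ^ p) π :=
    ((integrable_const 1).add hmπ1).add hmπ2
  -- `Memℒp` facts for Cauchy–Schwarz
  have hGmem : MemLp G (ENNReal.ofReal 2) π :=
    MemLp.of_bound hGm.aestronglyMeasurable 1 (ae_of_all _ fun z => by
      rw [Real.norm_eq_abs, abs_of_nonneg (hG0 z)]; exact hG1 z)
  have hHmem : MemLp H (ENNReal.ofReal 2) π := by
    rw [show ENNReal.ofReal 2 = 2 by norm_num]
    refine (memLp_two_iff_integrable_sq hHm.aestronglyMeasurable).mpr ?_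
    refine hHsqInt.congr (ae_of_all _ fun z => ?_)
    exact (Real.sq_sqrt (by positivity : (0:ℝ) ≤ 1 + ‖z.1‖ ^ p + ‖z.2‖ ^ p)).symm
  have hCS := integral_mul_le_Lp_mul_Lq_of_nonneg
    Real.HolderConjugate.two_two
    (ae_of_all _ hG0) (ae_of_all _ fun z => Real.sqrt_nonneg _) hGmem hHmem
  -- identify `∫ H^2`
  have hH2 : ∫ z : E × E, H z ^ (2 : ℝ) ∂π
      = 1 + (∫ u, ‖u‖ ^ p ∂ν₁) + ∫ u, ‖u‖ ^ p ∂ν₂ := by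
    have h01 : Integrable (fun z : E × E => 1 + ‖z.1‖ ^ p) π := (integrable_const 1).add hmπ1
    rw [integral_congr_ae (ae_of_all _ hHsq),
      integral_add h01 hmπ2,
      integral_add (integrable_const 1) hmπ1, integral_const, probReal_univ,
      one_smul, hIm1, hIm2]
  -- identify `∫ G^2` with `∫ P^γ` where `P z = min 1 ‖z.1-z.2‖²`
  set P : E × E → ℝ := fun z => min 1 (‖z.1 - z.2‖ ^ 2) with hPdef
  have hPm : Measurable P :=
    measurable_const.min ((measurable_fst.sub measurable_snd).norm.pow_const 2)
  have hP0 : ∀ z, 0 ≤ P z := fun z => le_min zero_le_one (by positivity)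
  have hP1 : ∀ z, P z ≤ 1 := fun z => min_le_left _ _
  have hG2eq : ∀ z : E × E, G z ^ (2 : ℝ) = P z ^ γ := by
    intro z
    have ht : (0 : ℝ) ≤ ‖z.1 - z.2‖ := norm_nonneg _
    rcases le_total (‖z.1 - z.2‖) 1 with h | h
    · have h2 : ‖z.1 - z.2‖ ^ 2 ≤ 1 := by nlinarith
      have hγle : ‖z.1 - z.2‖ ^ γ ≤ 1 := Real.rpow_le_one ht h hγ0.le
      simp only [hGdef, hPdef, min_eq_right h2, min_eq_right hγle]
      rw [show (‖z.1 - z.2‖ : ℝ) ^ (2 : ℕ) = ‖z.1 - z.2‖ ^ ((2 : ℕ) : ℝ) from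
        (Real.rpow_natCast _ 2).symm, ← Real.rpow_mul ht, ← Real.rpow_mul ht]
      norm_num [mul_comm]
    · have h2 : (1 : ℝ) ≤ ‖z.1 - z.2‖ ^ 2 := by nlinarith
      have hγge : (1 : ℝ) ≤ ‖z.1 - z.2‖ ^ γ := Real.one_le_rpow h hγ0.le
      simp only [hGdef, hPdef, min_eq_left h2, min_eq_left hγge]
      simp [Real.one_rpow]
  -- integrabilities of P and P^γ (both bounded)
  have hPint : Integrable P π :=
    Integrable.mono' (integrable_const 1) hPm.aestronglyMeasurable
      (ae_of_all _ fun z => by rw [Real.norm_eq_abs, abs_of_nonneg (hP0 z)]; exact hP1 z)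
  have hPγint : Integrable (fun z => P z ^ γ) π :=
    Integrable.mono' (integrable_const 1) (hPm.pow_const γ).aestronglyMeasurable
      (ae_of_all _ fun z => by
        rw [Real.norm_eq_abs, abs_of_nonneg (Real.rpow_nonneg (hP0 z) γ)]
        exact Real.rpow_le_one (hP0 z) (hP1 z) hγ0.le)
  have hjensen : ∫ z, P z ^ γ ∂π ≤ (∫ z, P z ∂π) ^ γ :=
    jensen_rpow π hγ0 hγ1 hPint hPγint hP0
  have hPI0 : 0 ≤ ∫ z, P z ∂π := integral_nonneg hP0
  -- put the Cauchy–Schwarz bound into final form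
  have hGpow : (∫ z : E × E, G z ^ (2 : ℝ) ∂π) ^ (1 / (2:ℝ))
      ≤ (∫ z, P z ∂π) ^ (γ / 2) := by
    have h1 : ∫ z : E × E, G z ^ (2 : ℝ) ∂π = ∫ z, P z ^ γ ∂π :=
      integral_congr_ae (ae_of_all _ hG2eq)
    rw [h1]
    calc (∫ z, P z ^ γ ∂π) ^ (1 / (2:ℝ))
        ≤ ((∫ z, P z ∂π) ^ γ) ^ (1 / (2:ℝ)) := by
          apply Real.rpow_le_rpow (integral_nonneg fun z => Real.rpow_nonneg (hP0 z) γ)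
            hjensen (by norm_num)
      _ = (∫ z, P z ∂π) ^ (γ / 2) := by
          rw [← Real.rpow_mul hPI0]; congr 1; ring
  -- integrability of `dpg` over π
  have hdpgfun : (fun z : E × E => dpg p γ z.1 z.2) = fun z => G z * H z := rfl
  have hHle : ∀ z : E × E, H z ≤ 1 + ‖z.1‖ ^ p + ‖z.2‖ ^ p := fun z =>
    Real.sqrt_le_iff.mpr ⟨by positivity, by nlinarith [hrp z.1, hrp z.2]⟩
  have hdpgInt : Integrable (fun z : E × E => dpg p γ z.1 z.2) π := by
    rw [hdpgfun]
    refine Integrable.mono' hHsqInt (hGm.mul hHm).aestronglyMeasurable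
      (ae_of_all _ fun z => ?_)
    rw [Real.norm_eq_abs, abs_of_nonneg (mul_nonneg (hG0 z) (Real.sqrt_nonneg _))]
    calc G z * H z ≤ 1 * H z :=
          mul_le_mul_of_nonneg_right (hG1 z) (Real.sqrt_nonneg _)
      _ = H z := one_mul _
      _ ≤ _ := hHle z
  -- main chain
  have hsub : Integrable (fun z : E × E => f z.1 - f z.2) π := hc1.sub hc2
  have hB0 : 0 ≤ Real.sqrt (1 + (∫ u, ‖u‖ ^ p ∂ν₁) + ∫ u, ‖u‖ ^ p ∂ν₂) := Real.sqrt_nonneg _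
  have hA0 : 0 ≤ (∫ z, P z ∂π) ^ (γ / 2) := Real.rpow_nonneg hPI0 _
  have hLC : L ≤ CNorm p γ f := by
    unfold CNorm
    rw [← hM, ← hL]
    linarith
  have hsqrt_eq : (1 + (∫ u, ‖u‖ ^ p ∂ν₁) + ∫ u, ‖u‖ ^ p ∂ν₂) ^ (1 / (2:ℝ))
      = Real.sqrt (1 + (∫ u, ‖u‖ ^ p ∂ν₁) + ∫ u, ‖u‖ ^ p ∂ν₂) :=
    (Real.sqrt_eq_rpow _).symm
  calc |(∫ u, f u ∂ν₁) - ∫ u, f u ∂ν₂|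
      = |∫ z : E × E, (f z.1 - f z.2) ∂π| := by
        rw [hI1, hI2, integral_sub hc1 hc2]
    _ ≤ ∫ z : E × E, |f z.1 - f z.2| ∂π := by
        simpa [Real.norm_eq_abs] using norm_integral_le_integral_norm
          (μ := π) (f := fun z : E × E => f z.1 - f z.2)
    _ ≤ ∫ z : E × E, L * dpg p γ z.1 z.2 ∂π := by
        exact integral_mono hsub.abs (hdpgInt.const_mul L) fun z => hkey z.1 z.2
    _ = L * ∫ z : E × E, dpg p γ z.1 z.2 ∂π := integral_const_mul L _
    _ ≤ L * ((∫ z : E × E, G z ^ (2:ℝ) ∂π) ^ (1/(2:ℝ)) *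
          (∫ z : E × E, H z ^ (2:ℝ) ∂π) ^ (1/(2:ℝ))) := by
        apply mul_le_mul_of_nonneg_left _ hL0
        rw [hdpgfun]
        exact hCS
    _ = L * ((∫ z : E × E, G z ^ (2:ℝ) ∂π) ^ (1/(2:ℝ)) *
          Real.sqrt (1 + (∫ u, ‖u‖ ^ p ∂ν₁) + ∫ u, ‖u‖ ^ p ∂ν₂)) := by
        rw [hH2, hsqrt_eq]
    _ ≤ L * ((∫ z, P z ∂π) ^ (γ / 2) *
          Real.sqrt (1 + (∫ u, ‖u‖ ^ p ∂ν₁) + ∫ u, ‖u‖ ^ p ∂ν₂)) := by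
        apply mul_le_mul_of_nonneg_left (mul_le_mul_of_nonneg_right hGpow hB0) hL0
    _ ≤ CNorm p γ f * Real.sqrt (1 + (∫ u, ‖u‖ ^ p ∂ν₁) + ∫ u, ‖u‖ ^ p ∂ν₂) *
          (∫ z, P z ∂π) ^ (γ / 2) := by
        rw [show L * ((∫ z, P z ∂π) ^ (γ / 2) * Real.sqrt (1 + (∫ u, ‖u‖ ^ p ∂ν₁) +
          ∫ u, ‖u‖ ^ p ∂ν₂)) = L * Real.sqrt (1 + (∫ u, ‖u‖ ^ p ∂ν₁) + ∫ u, ‖u‖ ^ p ∂ν₂) *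
          (∫ z, P z ∂π) ^ (γ / 2) by ring]
        exact mul_le_mul_of_nonneg_right (mul_le_mul_of_nonneg_right hLC hB0) hA0
end
end

section
/- Let β ∈ (0,1] and let λ be a real number with 2λ > β + 1. Then for all integers n ≥ 1 and 0 ≤ m ≤ n−1, Σ_{i=m}^{n−1} (1/(i+1))^β · [((i+2)/(n+1))^{2λ} − (i/n)^{2λ}] ≤ (2+5β) · (1/n)^β. -/
noncomputable section

private lemma exp_combo (x l : ℝ) (h0 : 0 ≤ l) (h1 : l ≤ 1) :
    Real.exp (l * x) ≤ l * Real.exp x + (1 - l) := by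
  have h := convexOn_exp.2 (Set.mem_univ x) (Set.mem_univ (0 : ℝ)) h0
    (show (0:ℝ) ≤ 1 - l by linarith) (by ring)
  simpa using h

private lemma bernoulli_chord (c b : ℝ) (hc : 1 ≤ c) (h0 : 0 ≤ b) (h1 : b ≤ 1) :
    c ^ b ≤ 1 + b * (c - 1) := by
  have hcpos : (0:ℝ) < c := by linarith
  rw [Real.rpow_def_of_pos hcpos]
  have h := exp_combo (Real.log c) b h0 h1
  rw [Real.exp_log hcpos] at h
  calc Real.exp (Real.log c * b) = Real.exp (b * Real.log c) := by rw [mul_comm]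
    _ ≤ b * c + (1 - b) := h
    _ = 1 + b * (c - 1) := by ring

private lemma t_ineq (t p q : ℝ) (ht0 : 0 ≤ t) (hq : 0 < q) (hpq : q ≤ p) :
    p * t ^ q ≤ q * t ^ p + (p - q) := by
  have hp : 0 < p := lt_of_lt_of_le hq hpq
  rcases eq_or_lt_of_le ht0 with h | h
  · rw [← h, Real.zero_rpow hq.ne', Real.zero_rpow hp.ne']
    linarith
  · have hl0 : 0 ≤ q / p := by positivity
    have hl1 : q / p ≤ 1 := by rw [div_le_one hp]; exact hpq
    have h1 := exp_combo (p * Real.log t) (q / p) hl0 hl1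
    rw [Real.rpow_def_of_pos h, Real.rpow_def_of_pos h]
    have heq : q / p * (p * Real.log t) = Real.log t * q := by
      field_simp
    have heq2 : p * Real.log t = Real.log t * p := mul_comm _ _
    rw [heq, heq2] at h1
    have h2 := mul_le_mul_of_nonneg_left h1 hp.le
    have h3 : p * (q / p * Real.exp (Real.log t * p) + (1 - q / p))
        = q * Real.exp (Real.log t * p) + (p - q) := by
      field_simp
      try ring
    calc p * Real.exp (Real.log t * q)
        ≤ p * (q / p * Real.exp (Real.log t * p) + (1 - q / p)) := h2
      _ = q * Real.exp (Real.log t * p) + (p - q) := h3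

private lemma key_ineq (a b p q : ℝ) (hb : 0 ≤ b) (hba : b ≤ a) (hq : 0 < q) (hpq : q ≤ p) :
    q * (a ^ p - b ^ p) ≤ p * a ^ (p - q) * (a ^ q - b ^ q) := by
  have hp : 0 < p := lt_of_lt_of_le hq hpq
  have ha0 : 0 ≤ a := hb.trans hba
  rcases eq_or_lt_of_le ha0 with h | ha
  · have hb0 : b = 0 := le_antisymm (h ▸ hba) hb
    rw [← h, hb0]
    simp [Real.zero_rpow hp.ne', Real.zero_rpow hq.ne']
  · set t := b / a with htdef
    have ht0 : 0 ≤ t := div_nonneg hb ha.le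
    have ht1 : t ≤ 1 := by rw [div_le_one ha]; exact hba
    have hbt : b = a * t := by rw [htdef, mul_comm]; exact (div_mul_cancel₀ b ha.ne').symm
    have h1 := t_ineq t p q ht0 hq hpq
    have h2 : q * (1 - t ^ p) ≤ p * (1 - t ^ q) := by linarith
    rw [hbt, Real.mul_rpow ha.le ht0, Real.mul_rpow ha.le ht0]
    have hap : a ^ (p - q) * a ^ q = a ^ p := by
      rw [← Real.rpow_add ha]; ring_nf
    have h3 := mul_le_mul_of_nonneg_left h2 (Real.rpow_nonneg ha.le p)
    calc q * (a ^ p - a ^ p * t ^ p) = a ^ p * (q * (1 - t ^ p)) := by ring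
      _ ≤ a ^ p * (p * (1 - t ^ q)) := h3
      _ = p * (a ^ (p - q) * a ^ q) * (1 - t ^ q) := by rw [hap]; ring
      _ = p * a ^ (p - q) * (a ^ q - a ^ q * t ^ q) := by ring

set_option maxHeartbeats 1000000 in
/-- For `β ∈ (0,1]` and real `λ` with `2λ > β + 1`, for all integers `n ≥ 1`
and `0 ≤ m ≤ n−1`,
`∑_{i=m}^{n−1} (1/(i+1))^β [((i+2)/(n+1))^{2λ} − (i/n)^{2λ}] ≤ (2+5β)(1/n)^β`. -/
theorem weighted_power_sum_bound (β lam : ℝ)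
    (hβ : β ∈ Set.Ioc (0 : ℝ) 1) (hlam : β + 1 < 2 * lam)
    (n m : ℕ) (hn : 1 ≤ n) (hm : m ≤ n - 1) :
    ∑ i ∈ Finset.Icc m (n - 1),
        (1 / ((i : ℝ) + 1)) ^ β *
          ((((i : ℝ) + 2) / ((n : ℝ) + 1)) ^ (2 * lam) - ((i : ℝ) / (n : ℝ)) ^ (2 * lam))
      ≤ (2 + 5 * β) * (1 / (n : ℝ)) ^ β := by
  obtain ⟨hβ0, hβ1⟩ := hβ
  set p := 2 * lam with hpdef
  set q := p - β with hqdef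
  have hq1 : 1 < q := by rw [hqdef, hpdef]; linarith
  have hq0 : 0 < q := by linarith
  have hqp : q ≤ p := by rw [hqdef]; linarith
  have hp0 : 0 < p := lt_of_lt_of_le hq0 hqp
  have hpq' : p - q = β := by rw [hqdef]; ring
  have hn0 : (0:ℝ) < (n:ℝ) := by exact_mod_cast hn
  have hn1 : (0:ℝ) < (n:ℝ) + 1 := by linarith
  set N := n - 1 with hNdef
  have hNcast : (N:ℝ) = (n:ℝ) - 1 := by
    rw [hNdef, Nat.cast_sub hn]; norm_num
  set C : ℝ := (1 + β) * (3/2 : ℝ) ^ β * (1 / (n:ℝ)) ^ β with hCdef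
  have hCnonneg : 0 ≤ C := by positivity
  -- pointwise bound
  have hpoint : ∀ i ∈ Finset.Icc m N,
      (1 / ((i : ℝ) + 1)) ^ β *
          ((((i : ℝ) + 2) / ((n : ℝ) + 1)) ^ p - ((i : ℝ) / (n : ℝ)) ^ p)
        ≤ C * ((((i : ℝ) + 2) / ((n : ℝ) + 1)) ^ q - ((i : ℝ) / (n : ℝ)) ^ q) := by
    intro i hi
    obtain ⟨him, hiN⟩ := Finset.mem_Icc.mp hi
    have hx0 : (0:ℝ) ≤ (i:ℝ) := Nat.cast_nonneg i
    have hxn : (i:ℝ) ≤ (n:ℝ) - 1 := by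
      have h' : (i:ℝ) ≤ (N:ℝ) := Nat.cast_le.mpr hiN
      rw [hNcast] at h'; exact h'
    set a : ℝ := ((i:ℝ) + 2) / ((n:ℝ) + 1) with hadef
    set b : ℝ := (i:ℝ) / (n:ℝ) with hbdef
    have ha0 : 0 < a := by positivity
    have hb0 : (0:ℝ) ≤ b := by positivity
    have hba : b ≤ a := by
      rw [hbdef, hadef, div_le_div_iff₀ hn0 hn1]; nlinarith
    have hE0 : 0 ≤ a ^ q - b ^ q :=
      sub_nonneg.2 (Real.rpow_le_rpow hb0 hba hq0.le)
    rcases Nat.eq_zero_or_pos i with hi0 | hi1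
    · -- i = 0 case
      subst hi0
      have hb' : b = 0 := by rw [hbdef]; norm_num
      rw [hb', Real.zero_rpow hp0.ne', Real.zero_rpow hq0.ne']
      have haval : a = 2 / ((n:ℝ) + 1) := by rw [hadef]; norm_num
      have hap : a ^ p = a ^ β * a ^ q := by
        rw [← Real.rpow_add ha0, hqdef]; ring_nf
      have haβ : a ^ β ≤ C := by
        have h2 : a ≤ 2 / (n:ℝ) := by
          rw [haval]; gcongr; linarith
        have h3 : a ^ β ≤ (2 / (n:ℝ)) ^ β :=
          Real.rpow_le_rpow ha0.le h2 hβ0.le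
        have h4 : (2 / (n:ℝ)) ^ β = (4/3 : ℝ) ^ β * ((3/2 : ℝ) ^ β * (1 / (n:ℝ)) ^ β) := by
          rw [← Real.mul_rpow (by norm_num) (by positivity),
            ← Real.mul_rpow (by norm_num) (by positivity)]
          congr 1
          ring
        have h5 : (4/3 : ℝ) ^ β ≤ 1 + β := by
          have := bernoulli_chord (4/3) β (by norm_num) hβ0.le hβ1
          nlinarith
        calc a ^ β ≤ (4/3 : ℝ) ^ β * ((3/2 : ℝ) ^ β * (1 / (n:ℝ)) ^ β) := by
              rw [← h4]; exact h3
          _ ≤ (1 + β) * ((3/2 : ℝ) ^ β * (1 / (n:ℝ)) ^ β) := by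
              apply mul_le_mul_of_nonneg_right h5 (by positivity)
          _ = C := by rw [hCdef]; ring
      have hw1 : (1 / (((0:ℕ):ℝ) + 1)) ^ β = 1 := by
        norm_num
      rw [hw1, one_mul, sub_zero, sub_zero, hap]
      exact mul_le_mul_of_nonneg_right haβ (Real.rpow_nonneg ha0.le q)
    · -- i ≥ 1 case
      have hx1 : (1:ℝ) ≤ (i:ℝ) := by exact_mod_cast hi1
      set w : ℝ := (1 / ((i:ℝ) + 1)) ^ β with hwdef
      have hw0 : 0 ≤ w := Real.rpow_nonneg (by positivity) β
      have hkey := key_ineq a b p q hb0 hba hq0 hqp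
      rw [hpq'] at hkey
      have hD : a ^ p - b ^ p ≤ p * a ^ β * (a ^ q - b ^ q) / q := by
        rw [le_div_iff₀ hq0]; linarith
      have hcoef : w * (p * a ^ β) / q ≤ C := by
        have hwa : w * a ^ β = ((((i:ℝ) + 2)) / (((i:ℝ) + 1) * ((n:ℝ) + 1))) ^ β := by
          rw [hwdef, hadef, ← Real.mul_rpow (by positivity) (by positivity)]
          congr 1
          rw [div_mul_div_comm, one_mul]
        have hbase : (((i:ℝ) + 2)) / (((i:ℝ) + 1) * ((n:ℝ) + 1)) ≤ 3/2 * (1 / (n:ℝ)) := by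
          rw [show (3/2 : ℝ) * (1 / (n:ℝ)) = 3 / (2 * (n:ℝ)) by ring]
          rw [div_le_div_iff₀ (by positivity) (by positivity)]
          have h6 : (n:ℝ) ≤ (i:ℝ) * (n:ℝ) := le_mul_of_one_le_left hn0.le hx1
          nlinarith [h6]
        have hwa2 : w * a ^ β ≤ (3/2 : ℝ) ^ β * (1 / (n:ℝ)) ^ β := by
          rw [hwa, ← Real.mul_rpow (by norm_num) (by positivity)]
          exact Real.rpow_le_rpow (by positivity) hbase hβ0.le
        have hpq2 : p / q ≤ 1 + β := by
          rw [div_le_iff₀ hq0]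
          have hβq : β * 1 ≤ β * q := by nlinarith
          nlinarith [hpq']
        calc w * (p * a ^ β) / q = (p / q) * (w * a ^ β) := by ring
          _ ≤ (1 + β) * ((3/2 : ℝ) ^ β * (1 / (n:ℝ)) ^ β) := by
              apply mul_le_mul hpq2 hwa2 (by positivity) (by linarith)
          _ = C := by rw [hCdef]; ring
      calc w * (a ^ p - b ^ p) ≤ w * (p * a ^ β * (a ^ q - b ^ q) / q) :=
            mul_le_mul_of_nonneg_left hD hw0
        _ = (w * (p * a ^ β) / q) * (a ^ q - b ^ q) := by ring
        _ ≤ C * (a ^ q - b ^ q) := mul_le_mul_of_nonneg_right hcoef hE0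
  -- sum bound : ∑ (A i - B i) ≤ 2
  have hB0 : ∀ j : ℕ, (0:ℝ) ≤ ((j:ℝ) / (n:ℝ)) ^ q :=
    fun j => Real.rpow_nonneg (by positivity) q
  have hAN : (((N:ℝ) + 2) / ((n:ℝ) + 1)) ^ q = 1 := by
    rw [hNcast]
    have h : ((n:ℝ) - 1 + 2) / ((n:ℝ) + 1) = 1 := by
      rw [div_eq_one_iff_eq (by linarith)]; ring
    rw [h, Real.one_rpow]
  have hsum2 : ∑ i ∈ Finset.Icc m N,
      ((((i : ℝ) + 2) / ((n : ℝ) + 1)) ^ q - ((i : ℝ) / (n : ℝ)) ^ q) ≤ 2 := by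
    rw [Finset.sum_sub_distrib]
    have hmain : ∑ i ∈ Finset.Icc m N, (((i : ℝ) + 2) / ((n : ℝ) + 1)) ^ q
        ≤ 2 + ∑ i ∈ Finset.Icc m N, ((i : ℝ) / (n : ℝ)) ^ q := by
      rcases eq_or_lt_of_le hm with heq | hlt
      · rw [heq, Finset.Icc_self, Finset.sum_singleton, Finset.sum_singleton, hAN]
        linarith [hB0 N]
      · -- m < N, so N ≥ 1
        have hN1 : 1 ≤ N := Nat.one_le_iff_ne_zero.mpr (by omega)
        have hNsplit : N - 1 + 1 = N := Nat.succ_pred_eq_of_pos hN1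
        have hstep1 : ∑ i ∈ Finset.Icc m N, (((i : ℝ) + 2) / ((n : ℝ) + 1)) ^ q
            = (∑ i ∈ Finset.Icc m (N-1), (((i : ℝ) + 2) / ((n : ℝ) + 1)) ^ q) + 1 := by
          conv_lhs => rw [← hNsplit]
          rw [Finset.sum_Icc_succ_top (by omega)]
          congr 1
          rw [show ((N - 1 + 1 : ℕ) : ℝ) = (N : ℝ) by rw [hNsplit]]
          exact hAN
        have hstep2 : ∑ i ∈ Finset.Icc m (N-1), (((i : ℝ) + 2) / ((n : ℝ) + 1)) ^ q
            ≤ ∑ i ∈ Finset.Icc m (N-1), (((i:ℝ) + 2) / (n:ℝ)) ^ q := by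
          apply Finset.sum_le_sum
          intro i _
          apply Real.rpow_le_rpow (by positivity) _ hq0.le
          gcongr
          linarith
        have hstep3 : ∑ i ∈ Finset.Icc m (N-1), (((i:ℝ) + 2) / (n:ℝ)) ^ q
            = ∑ j ∈ Finset.Icc (m+2) (N+1), ((j:ℝ) / (n:ℝ)) ^ q := by
          have hmap : Finset.Icc (m+2) (N-1+2) =
              (Finset.Icc m (N-1)).map (addRightEmbedding 2) := by
            rw [Finset.map_add_right_Icc]
          rw [show N + 1 = N - 1 + 2 by omega, hmap, Finset.sum_map]
          apply Finset.sum_congr rfl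
          intro i _
          simp only [addRightEmbedding_apply]
          push_cast
          ring_nf
        have hstep4 : ∑ j ∈ Finset.Icc (m+2) (N+1), ((j:ℝ) / (n:ℝ)) ^ q
            = (∑ j ∈ Finset.Icc (m+2) N, ((j:ℝ) / (n:ℝ)) ^ q) + 1 := by
          rw [Finset.sum_Icc_succ_top (by omega)]
          congr 1
          have hNn : ((N + 1 : ℕ) : ℝ) = (n : ℝ) := by
            push_cast [hNcast]; ring
          rw [hNn, div_self hn0.ne', Real.one_rpow]
        have hstep5 : ∑ j ∈ Finset.Icc (m+2) N, ((j:ℝ) / (n:ℝ)) ^ q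
            ≤ ∑ j ∈ Finset.Icc m N, ((j:ℝ) / (n:ℝ)) ^ q := by
          apply Finset.sum_le_sum_of_subset_of_nonneg
          · exact Finset.Icc_subset_Icc (by omega) le_rfl
          · intro j _ _; exact hB0 j
        rw [hstep1]
        linarith [hstep2, hstep3, hstep4, hstep5]
    linarith
  -- combine
  calc ∑ i ∈ Finset.Icc m N,
        (1 / ((i : ℝ) + 1)) ^ β *
          ((((i : ℝ) + 2) / ((n : ℝ) + 1)) ^ p - ((i : ℝ) / (n : ℝ)) ^ p)
      ≤ ∑ i ∈ Finset.Icc m N,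
        C * ((((i : ℝ) + 2) / ((n : ℝ) + 1)) ^ q - ((i : ℝ) / (n : ℝ)) ^ q) :=
        Finset.sum_le_sum hpoint
    _ = C * ∑ i ∈ Finset.Icc m N,
        ((((i : ℝ) + 2) / ((n : ℝ) + 1)) ^ q - ((i : ℝ) / (n : ℝ)) ^ q) := by
        rw [Finset.mul_sum]
    _ ≤ C * 2 := mul_le_mul_of_nonneg_left hsum2 hCnonneg
    _ ≤ (2 + 5 * β) * (1 / (n : ℝ)) ^ β := by
        have h32 : (3/2 : ℝ) ^ β ≤ 1 + β * (1/2) := by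
          have := bernoulli_chord (3/2) β (by norm_num) hβ0.le hβ1
          nlinarith
        have h320 : (0:ℝ) ≤ (3/2 : ℝ) ^ β := Real.rpow_nonneg (by norm_num) β
        have hcoef : (1 + β) * (3/2 : ℝ) ^ β * 2 ≤ 2 + 5 * β := by nlinarith
        calc C * 2 = ((1 + β) * (3/2 : ℝ) ^ β * 2) * (1 / (n:ℝ)) ^ β := by
              rw [hCdef]; ring
          _ ≤ (2 + 5 * β) * (1 / (n : ℝ)) ^ β :=
              mul_le_mul_of_nonneg_right hcoef (Real.rpow_nonneg (by positivity) β)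

end
end
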